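/- Let u ∈ ℤ, i ∈ ZMod 3, k ≥ 1, and α = δᵘ·a_iᵏ, and suppose π(α) is a 3-cycle (the closure of α is a knot). Then k is even. If moreover α is a summit element with summit exponent u, then u + 1 ≡ 0 (mod 3). -/

import Mathlib

namespace Braid

/-- Relations of the dual (band-generator) presentation of the 3-braid group:
`a (i+1) * a i = a (i+2) * a (i+1)` for all `i : ZMod 3`. -/
def braidRels : Set (FreeGroup (ZMod 3)) :=
  { r | ∃ i : ZMod 3,
      r = FreeGroup.of (i + 1) * FreeGroup.of i *
          (FreeGroup.of (i + 2) * FreeGroup.of (i + 1))⁻¹ }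

/-- The 3-braid group with the band-generator presentation. -/
abbrev B3 := PresentedGroup braidRels

/-- The band generators `a i`, `i : ZMod 3`. -/
def a (i : ZMod 3) : B3 := PresentedGroup.of i

/-- The fundamental element `δ = a₂ * a₁`. -/
def δ : B3 := a 2 * a 1

/-- The submonoid of positive braids. -/
def Pos : Submonoid B3 := Submonoid.closure (Set.range a)

/-- The exponent-sum homomorphism, sending each generator to `1 : ℤ`. -/
def eHom : B3 →* Multiplicative ℤ :=
  PresentedGroup.toGroup (f := fun _ => Multiplicative.ofAdd (1 : ℤ)) (by
    rintro r ⟨i, rfl⟩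
    simp only [map_mul, map_inv, FreeGroup.lift_apply_of]
    group)

/-- The exponent sum (letter length on positive braids) as an integer. -/
def elen (x : B3) : ℤ := Multiplicative.toAdd (eHom x)

/-- The right complement `X* = X⁻¹ * δ^{e(X)}`. -/
def rc (X : B3) : B3 := X⁻¹ * δ ^ elen X

/-- The `n`-th power of the rotation automorphism `τ`: `τ^n (x) = δ^{-n} * x * δ^n`. -/
def tauPow (n : ℤ) (x : B3) : B3 := δ ^ (-n) * x * δ ^ n

/-- The positive braid represented by a list of generator indices. -/
def wordProd (l : List (ZMod 3)) : B3 := (l.map a).prod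

/-- A word is nondecreasing if each letter index is the previous one or the previous one
plus `1` (mod 3). -/
def NDWord (l : List (ZMod 3)) : Prop :=
  l.Chain' (fun x y => y = x ∨ y = x + 1)

/-- The syllable number of a word: the number of maximal constant blocks. -/
def syl : List (ZMod 3) → ℕ
  | [] => 0
  | [_] => 1
  | x :: y :: t => (if x = y then 0 else 1) + syl (y :: t)

/-- The permutations underlying the band generators. -/
def perm3 (i : ZMod 3) : Equiv.Perm (Fin 3) :=
  if i = 0 then Equiv.swap 0 2 else if i = 1 then Equiv.swap 0 1 else Equiv.swap 1 2

lemma perm3_rel : ∀ i : ZMod 3,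
    perm3 (i + 1) * perm3 i * (perm3 (i + 2) * perm3 (i + 1))⁻¹ = 1 := by decide

/-- The homomorphism to the symmetric group on 3 letters (underlying permutation). -/
def permOf : B3 →* Equiv.Perm (Fin 3) :=
  PresentedGroup.toGroup (f := perm3) (by
    rintro r ⟨i, rfl⟩
    simp only [map_mul, map_inv, FreeGroup.lift_apply_of]
    exact perm3_rel i)

/-- The set of band generators and their inverses. -/
def genSet : Set B3 := Set.range a ∪ Set.range (fun i => (a i)⁻¹)

/-- The band-generator word length of a 3-braid. -/
noncomputable def wordLen (x : B3) : ℕ :=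
  sInf { n | ∃ s : List B3, s.length = n ∧ (∀ g ∈ s, g ∈ genSet) ∧ s.prod = x }

/-- The minimal band-generator word length in the conjugacy class. -/
noncomputable def minConjLen (x : B3) : ℕ :=
  sInf { n | ∃ y, IsConj x y ∧ wordLen y = n }

/-- `α` is a summit element with summit exponent `u` if `δ^{-u} * α` is positive and `u` is
the maximal such exponent over the conjugacy class. -/
def IsSummit (α : B3) (u : ℤ) : Prop :=
  δ ^ (-u) * α ∈ Pos ∧ ∀ β : B3, IsConj α β → ∀ v : ℤ, δ ^ (-v) * β ∈ Pos → v ≤ u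

lemma braid_rel (i : ZMod 3) : a (i + 1) * a i = a (i + 2) * a (i + 1) := by
  have hmem : (FreeGroup.of (i + 1) * FreeGroup.of i *
      (FreeGroup.of (i + 2) * FreeGroup.of (i + 1))⁻¹ : FreeGroup (ZMod 3)) ∈
      Subgroup.normalClosure braidRels :=
    Subgroup.subset_normalClosure ⟨i, rfl⟩
  have h1 : (PresentedGroup.mk braidRels) (FreeGroup.of (i + 1) * FreeGroup.of i *
      (FreeGroup.of (i + 2) * FreeGroup.of (i + 1))⁻¹) = 1 :=
    (QuotientGroup.eq_one_iff _).2 hmem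
  simp only [map_mul, map_inv] at h1
  have h2 : (PresentedGroup.mk braidRels) (FreeGroup.of (i + 1)) = a (i + 1) := rfl
  have h3 : (PresentedGroup.mk braidRels) (FreeGroup.of i) = a i := rfl
  have h4 : (PresentedGroup.mk braidRels) (FreeGroup.of (i + 2)) = a (i + 2) := rfl
  rw [h2, h3, h4] at h1
  exact mul_inv_eq_one.mp h1

lemma delta_eq (i : ZMod 3) : a (i + 1) * a i = δ := by
  have e0 := braid_rel 0
  have e1 := braid_rel 1
  have h01 : (0 + 1 : ZMod 3) = 1 := by decide
  have h02 : (0 + 2 : ZMod 3) = 2 := by decide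
  have h11 : (1 + 1 : ZMod 3) = 2 := by decide
  have h12 : (1 + 2 : ZMod 3) = 0 := by decide
  rw [h01, h02] at e0
  rw [h11, h12] at e1
  have hi : ∀ j : ZMod 3, j = 0 ∨ j = 1 ∨ j = 2 := by decide
  have hi := hi i
  rcases hi with rfl | rfl | rfl
  · rw [h01]; rw [e0]; rfl
  · rw [h11]; rfl
  · have h21 : (2 + 1 : ZMod 3) = 0 := by decide
    rw [h21]
    show a 0 * a 2 = δ
    rw [← e1]; rfl

lemma a_mul_delta (i : ZMod 3) : a i * δ = δ * a (i + 1) := by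
  have h1 : a i * a (i + 2) = δ := by
    have := delta_eq (i + 2)
    have h : (i + 2 + 1 : ZMod 3) = i := by
      have : (2 + 1 : ZMod 3) = 0 := by decide
      rw [add_assoc, this, add_zero]
    rwa [h] at this
  have h2' : a (i + 2) * a (i + 1) = δ := by
    have := delta_eq (i + 1)
    have h : (i + 1 + 1 : ZMod 3) = i + 2 := by ring
    rwa [h] at this
  calc a i * δ = a i * (a (i + 2) * a (i + 1)) := by rw [h2']
    _ = (a i * a (i + 2)) * a (i + 1) := by group
    _ = δ * a (i + 1) := by rw [h1]

lemma a_mul_delta_inv (i : ZMod 3) : a i * δ⁻¹ = δ⁻¹ * a (i - 1) := by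
  have h0 := a_mul_delta (i - 1)
  have h : (i - 1 + 1 : ZMod 3) = i := by ring
  rw [h] at h0
  have h2 : a i = δ⁻¹ * (a (i - 1) * δ) := by rw [h0]; group
  rw [h2]; group

lemma a_mul_delta_zpow (i : ZMod 3) (u : ℤ) :
    a i * δ ^ u = δ ^ u * a (i + (u : ZMod 3)) := by
  induction u using Int.induction_on with
  | zero => simp
  | succ n ih =>
      have : ((n : ℤ) + 1 : ℤ) = (n : ℤ) + 1 := rfl
      rw [zpow_add_one, ← mul_assoc, ih, mul_assoc, a_mul_delta, ← mul_assoc,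
        ← zpow_add_one]
      push_cast
      ring_nf
  | pred n ih =>
      rw [zpow_sub_one, ← mul_assoc, ih, mul_assoc, a_mul_delta_inv, ← mul_assoc,
        ← zpow_sub_one]
      push_cast
      ring_nf

lemma a_pow_mul_delta_zpow (i : ZMod 3) (k : ℕ) (u : ℤ) :
    (a i) ^ k * δ ^ u = δ ^ u * (a (i + (u : ZMod 3))) ^ k := by
  induction k with
  | zero => simp
  | succ n ih =>
      rw [pow_succ, mul_assoc, a_mul_delta_zpow, ← mul_assoc, ih, mul_assoc, ← pow_succ]

lemma a_pow_mem_pos (i : ZMod 3) (k : ℕ) : (a i) ^ k ∈ Pos :=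
  pow_mem (Submonoid.subset_closure (Set.mem_range_self i)) k

lemma permOf_a (i : ZMod 3) : permOf (a i) = perm3 i := rfl

lemma permOf_delta : permOf δ = perm3 2 * perm3 1 := by
  rw [δ, map_mul, permOf_a, permOf_a]

lemma perm3_sq (i : ZMod 3) : perm3 i ^ 2 = 1 := by
  revert i; decide

lemma perm3_sign (i : ZMod 3) : Equiv.Perm.sign (perm3 i) = -1 := by
  revert i; decide

lemma delta_perm_cube : (perm3 2 * perm3 1) ^ 3 = 1 := by decide

lemma delta_perm_sign : Equiv.Perm.sign (perm3 2 * perm3 1) = 1 := by decide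

/-- Lemma 3.1: if `α = δ^u a_i^k` closes to a knot, then `k` is even; and if moreover `α` is a
summit element, then `u + 1 ≡ 0 (mod 3)`. -/
theorem syllable_one (u : ℤ) (i : ZMod 3) (k : ℕ) (hk : 1 ≤ k) (α : B3)
    (hα : α = δ ^ u * (a i) ^ k) (h3 : (permOf α).IsThreeCycle) :
    Even k ∧ (IsSummit α u → (u + 1) % 3 = 0) := by
  -- Step 1: k is even, via the sign homomorphism.
  have hsign : Equiv.Perm.sign (permOf α) = 1 := h3.sign
  have hperm : permOf α = (perm3 2 * perm3 1) ^ u * (perm3 i) ^ k := by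
    rw [hα, map_mul, map_zpow, map_pow, permOf_delta, permOf_a]
  have hke : Even k := by
    rw [hperm, map_mul, map_zpow, map_pow, delta_perm_sign, perm3_sign, one_zpow,
      one_mul] at hsign
    have hne : (-1 : ℤˣ) ≠ 1 := by decide
    exact (neg_one_pow_eq_one_iff_even hne).mp hsign
  refine ⟨hke, fun hsummit => ?_⟩
  -- u % 3 ≠ 0, since otherwise permOf α = 1.
  have hu0 : u % 3 ≠ 0 := by
    intro h0
    have hu : u = 3 * (u / 3) := by omega
    have hpk : (perm3 i) ^ k = 1 := by
      obtain ⟨m, rfl⟩ := hke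
      rw [← two_mul, pow_mul, perm3_sq, one_pow]
    have : permOf α = 1 := by
      rw [hperm, hpk, mul_one, hu, zpow_mul,
        show ((3:ℤ)) = ((3:ℕ):ℤ) from rfl, zpow_natCast, delta_perm_cube, one_zpow]
    rw [this] at h3
    simp [Equiv.Perm.IsThreeCycle] at h3
  -- u % 3 ≠ 1, by exhibiting a conjugate with a larger positive exponent.
  have hu1 : u % 3 ≠ 1 := by
    intro h1
    have hcast : ((u : ℤ) : ZMod 3) = 1 := by
      have hdvd : (3 : ℤ) ∣ (u - 1) := by omega
      have : ((u - 1 : ℤ) : ZMod 3) = 0 := (ZMod.intCast_zmod_eq_zero_iff_dvd _ _).mpr hdvd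
      push_cast at this
      linear_combination this
    have hk2 : 2 ≤ k := by
      rcases hke with ⟨m, hm⟩
      omega
    -- the conjugate β = δ^(u+1) * a(i+2)^(k-2)
    set g : B3 := δ ^ u * a i with hg
    have hβ : g⁻¹ * α * g = δ ^ (u + 1) * (a (i + 2)) ^ (k - 2) := by
      have e1 : g⁻¹ * α * g = (a i) ^ (k - 1) * (δ ^ u * a i) := by
        rw [hα, hg]
        have : (a i) ^ k = a i * (a i) ^ (k - 1) := by
          conv_lhs => rw [show k = 1 + (k - 1) by omega]
          rw [pow_add, pow_one]
        rw [this]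
        group
      rw [e1, ← mul_assoc, a_pow_mul_delta_zpow, hcast]
      have e2 : (a (i + 1)) ^ (k - 1) * a i = δ * (a (i + 2)) ^ (k - 2) := by
        have : (a (i + 1)) ^ (k - 1) = (a (i + 1)) ^ (k - 2) * a (i + 1) := by
          conv_lhs => rw [show k - 1 = (k - 2) + 1 by omega]
          rw [pow_succ]
        rw [this, mul_assoc, delta_eq]
        have := a_pow_mul_delta_zpow (i + 1) (k - 2) 1
        rw [zpow_one] at this
        rw [this]
        norm_num
        congr 1
        ring_nf
      rw [mul_assoc, e2, ← mul_assoc, ← zpow_add_one]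
    have hconj : IsConj α (δ ^ (u + 1) * (a (i + 2)) ^ (k - 2)) := by
      rw [isConj_iff]
      exact ⟨g⁻¹, by rw [inv_inv]; exact hβ⟩
    have hpos : δ ^ (-(u + 1)) * (δ ^ (u + 1) * (a (i + 2)) ^ (k - 2)) ∈ Pos := by
      have : δ ^ (-(u + 1)) * (δ ^ (u + 1) * (a (i + 2)) ^ (k - 2)) =
          (a (i + 2)) ^ (k - 2) := by group
      rw [this]
      exact a_pow_mem_pos _ _
    have := hsummit.2 _ hconj (u + 1) hpos
    omega
  omega
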